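/- For Λ symmetric positive definite, ∂ψ(x) = { F_nor^Λ(z) : prox_φ^Λ(z) = x }, where F_nor^Λ(z) := ∇f(prox_φ^Λ(z)) + Λ(z − prox_φ^Λ(z)) is the normal map. -/

import Mathlib

set_option maxHeartbeats 1000000

open scoped RealInnerProductSpace

/-- The convex subdifferential of a real-valued function. -/
def subdiff {n : ℕ} (φ : EuclideanSpace ℝ (Fin n) → ℝ) (x : EuclideanSpace ℝ (Fin n)) :
    Set (EuclideanSpace ℝ (Fin n)) :=
  {v | ∀ y, φ x + ⟪v, y - x⟫ ≤ φ y}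

theorem subdiff_eq_normal_map_image {n : ℕ}
    (f φ : EuclideanSpace ℝ (Fin n) → ℝ)
    (hf : ContDiff ℝ 1 f) (hφ : ConvexOn ℝ Set.univ φ)
    (Λ : Matrix (Fin n) (Fin n) ℝ) (hΛsym : Λ.IsSymm) (hΛ : Λ.PosDef)
    (prox : EuclideanSpace ℝ (Fin n) → EuclideanSpace ℝ (Fin n))
    (hprox : ∀ z y, φ (prox z) +
        (1 / 2) * ⟪prox z - z, Matrix.toEuclideanLin Λ (prox z - z)⟫ ≤
      φ y + (1 / 2) * ⟪y - z, Matrix.toEuclideanLin Λ (y - z)⟫)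
    (x : EuclideanSpace ℝ (Fin n)) :
    (fun v => gradient f x + v) '' subdiff φ x =
      {w | ∃ z, prox z = x ∧
        w = gradient f (prox z) + Matrix.toEuclideanLin Λ (z - prox z)} := by
  set A : EuclideanSpace ℝ (Fin n) →ₗ[ℝ] EuclideanSpace ℝ (Fin n) :=
    Matrix.toEuclideanLin Λ with hA
  have hsym : ∀ u w : EuclideanSpace ℝ (Fin n), ⟪A u, w⟫ = ⟪u, A w⟫ := by
    intro u w
    simp only [hA, EuclideanSpace.inner_eq_star_dotProduct, Matrix.toEuclideanLin_apply]
    simp [Matrix.dotProduct_mulVec, Matrix.star_mulVec, hΛsym.eq]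
    rw [← Matrix.mulVec_transpose, hΛsym.eq]
  have hpos : ∀ u : EuclideanSpace ℝ (Fin n), u ≠ 0 → 0 < ⟪u, A u⟫ := by
    intro u hu
    simp only [hA, EuclideanSpace.inner_eq_star_dotProduct, Matrix.toEuclideanLin_apply]
    have := hΛ.re_dotProduct_pos (x := (WithLp.equiv 2 _ u)) (by simpa using hu)
    simp at this ⊢
    rw [dotProduct_comm]
    exact this
  have hpos' : ∀ u : EuclideanSpace ℝ (Fin n), 0 ≤ ⟪u, A u⟫ := by
    intro u
    rcases eq_or_ne u 0 with h | h
    · simp [h]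
    · exact (hpos u h).le
  have hexp : ∀ u w : EuclideanSpace ℝ (Fin n),
      ⟪u + w, A (u + w)⟫ = ⟪u, A u⟫ + 2 * ⟪u, A w⟫ + ⟪w, A w⟫ := by
    intro u w
    have hcomm : ⟪w, A u⟫ = ⟪u, A w⟫ := (real_inner_comm _ _).trans (hsym u w)
    rw [map_add, inner_add_left, inner_add_right, inner_add_right, hcomm]
    ring
  have key : ∀ v, v ∈ subdiff φ x ↔ ∃ z, prox z = x ∧ v = A (z - x) := by
    intro v
    constructor
    · -- forward: find z with prox z = x
      intro hv
      -- A is surjective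
      have hinj : Function.Injective A := by
        rw [← LinearMap.ker_eq_bot, LinearMap.ker_eq_bot']
        intro u hu
        by_contra hne
        have := hpos u hne
        rw [hu] at this
        simp at this
      have hsurj : Function.Surjective A := (LinearMap.injective_iff_surjective).mp hinj
      obtain ⟨w, hw⟩ := hsurj v
      refine ⟨x + w, ?_, ?_⟩
      · -- prox (x + w) = x
        set z := x + w with hz
        set p := prox z with hp
        have h1 := hprox z x
        have h2 := hv p
        have hxz : x - z = -w := by rw [hz]; abel
        have hexp1 : ⟪p - z, A (p - z)⟫ =
            ⟪p - x, A (p - x)⟫ + 2 * ⟪p - x, A (x - z)⟫ + ⟪x - z, A (x - z)⟫ := by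
          have : p - z = (p - x) + (x - z) := by abel
          rw [this, hexp]
        have hcross : ⟪p - x, A (x - z)⟫ = -⟪v, p - x⟫ := by
          rw [hxz, map_neg, hw, inner_neg_right, real_inner_comm]
        rw [hexp1, hcross] at h1
        have hq : ⟪p - x, A (p - x)⟫ ≤ 0 := by nlinarith [h1, h2]
        have : p - x = 0 := by
          by_contra hne
          exact absurd hq (not_le.mpr (hpos _ hne))
        have := sub_eq_zero.mp this
        exact this
      · rw [hw.symm]
        congr 1
        abel
    · -- backward: prox z = x implies A (z - x) ∈ ∂φ(x)
      rintro ⟨z, hz, rfl⟩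
      intro y
      set c : ℝ := φ y - φ x - ⟪A (z - x), y - x⟫ with hc
      set d : ℝ := (1 / 2) * ⟪y - x, A (y - x)⟫ with hd
      have hd0 : 0 ≤ d := by
        have := hpos' (y - x)
        rw [hd]; linarith
      have keyt : ∀ t : ℝ, 0 < t → t ≤ 1 → 0 ≤ c + t * d := by
        intro t ht ht1
        have hyt := hprox z (x + t • (y - x))
        rw [hz] at hyt
        have hconv := hφ.2 (Set.mem_univ x) (Set.mem_univ y)
          (by linarith : (0:ℝ) ≤ 1 - t) ht.le (by ring)
        have heq : (1 - t) • x + t • y = x + t • (y - x) := by module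
        rw [heq] at hconv
        have hflip : ⟪x - z, A (y - x)⟫ = -⟪A (z - x), y - x⟫ := by
          rw [← hsym, show x - z = -(z - x) from by abel, map_neg, inner_neg_left]
        have hexp2 : ⟪x + t • (y - x) - z, A (x + t • (y - x) - z)⟫ =
            ⟪x - z, A (x - z)⟫ + 2 * (t * -⟪A (z - x), y - x⟫)
              + t ^ 2 * ⟪y - x, A (y - x)⟫ := by
          have h3 : x + t • (y - x) - z = (x - z) + t • (y - x) := by abel
          rw [h3, hexp, map_smul, real_inner_smul_right, real_inner_smul_left,
            real_inner_smul_right, hflip]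
          ring
        rw [hexp2] at hyt
        -- hyt : φ x + ½⟪x-z,A(x-z)⟫ ≤ φ(x+t•(y-x)) + ½(⟪x-z,A(x-z)⟫ - 2t⟪A(z-x),y-x⟫ + t²q)
        -- hconv : φ(x+t•(y-x)) ≤ (1-t)φx + tφy
        have h4 : 0 ≤ t * c + t ^ 2 * d := by
          rw [hc, hd]
          simp only [smul_eq_mul] at hconv
          nlinarith [hyt, hconv]
        by_contra hcc
        push_neg at hcc
        nlinarith [mul_pos ht (neg_pos.mpr hcc)]
      by_contra hcon
      push_neg at hcon
      -- hcon : φ y < φ x + ⟪A (z - x), y - x⟫, i.e. c < 0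
      have hc0 : c < 0 := by rw [hc]; linarith
      set t : ℝ := min 1 (-c / (2 * (d + 1))) with htdef
      have ht0 : 0 < t := by
        apply lt_min one_pos
        apply div_pos (by linarith) (by linarith)
      have ht1 : t ≤ 1 := min_le_left _ _
      have ht2 : t ≤ -c / (2 * (d + 1)) := min_le_right _ _
      have := keyt t ht0 ht1
      have htd : t * d ≤ (-c / (2 * (d + 1))) * d :=
        mul_le_mul_of_nonneg_right ht2 hd0
      have hlt : (-c / (2 * (d + 1))) * d < -c := by
        rw [div_mul_eq_mul_div, div_lt_iff₀ (by linarith : 0 < 2 * (d + 1))]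
        nlinarith
      linarith
  ext w
  simp only [Set.mem_image, Set.mem_setOf_eq, subdiff]
  constructor
  · rintro ⟨v, hv, rfl⟩
    obtain ⟨z, hz, hveq⟩ := (key v).mp hv
    exact ⟨z, hz, by rw [hz, hveq]⟩
  · rintro ⟨z, hz, rfl⟩
    refine ⟨A (z - x), (key _).mpr ⟨z, hz, rfl⟩, by rw [hz]⟩
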